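/- Assume β̄ > 0. For every ε > 0 and every x = (x₁,x₂) with 0 < x₂ < 1, the fast-variable horizontal average of the first-order full boundary-layer approximation equals the first-order averaged wall-law solution: (1/(2πε)) ∫₀^{2πε} u^{∞,1}_ε(x₁+s, x₂) ds = u¹(x), where u¹(x) = −(C/2)(x₂² − x₂/(1+εβ̄) − εβ̄/(1+εβ̄)). In particular the horizontal average over one period of β(·, y₂) equals β̄ for every y₂ ≥ 0. -/

import Mathlib

open MeasureTheory Real Set

noncomputable section

/-- Partial derivative in the first variable. -/
def pd1 (u : ℝ → ℝ → ℝ) (x y : ℝ) : ℝ := deriv (fun t => u t y) x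

/-- Partial derivative in the second variable. -/
def pd2 (u : ℝ → ℝ → ℝ) (x y : ℝ) : ℝ := deriv (fun t => u x t) y

/-- Laplacian. -/
def lap (u : ℝ → ℝ → ℝ) (x y : ℝ) : ℝ := pd1 (pd1 u) x y + pd2 (pd2 u) x y

/-- Squared modulus of the gradient. -/
def gradSq (u : ℝ → ℝ → ℝ) (x y : ℝ) : ℝ := (pd1 u x y) ^ 2 + (pd2 u x y) ^ 2

/-- The rough domain Ω^ε. -/
def OmegaEps (f : ℝ → ℝ) (L ε : ℝ) : Set (ℝ × ℝ) :=
  {p | 0 < p.1 ∧ p.1 < L ∧ ε * f (p.1 / ε) < p.2 ∧ p.2 < 1}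

/-- The smooth domain Ω⁰. -/
def Omega0 (L : ℝ) : Set (ℝ × ℝ) := Ioo 0 L ×ˢ Ioo (0 : ℝ) 1

/-- The periodic rough strip. -/
def RoughStrip (f : ℝ → ℝ) (ε : ℝ) : Set (ℝ × ℝ) :=
  {p | ε * f (p.1 / ε) < p.2 ∧ p.2 < 1}

/-- A classical solution of the rough problem `-Δu = C` in `Ω^ε`, `u = 0` on `Γ^ε ∪ Γ¹`,
periodic in `x₁`, with finite Dirichlet energy. -/
structure RoughSolution (f : ℝ → ℝ) (L C ε : ℝ) (u : ℝ → ℝ → ℝ) : Prop where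
  cont : ContinuousOn (fun p : ℝ × ℝ => u p.1 p.2) (closure (OmegaEps f L ε))
  periodic : ∀ x y, u (x + L) y = u x y
  smooth : ContDiffOn ℝ 2 (fun p : ℝ × ℝ => u p.1 p.2) (RoughStrip f ε)
  eqn : ∀ p ∈ OmegaEps f L ε, -(lap u p.1 p.2) = C
  bc_rough : ∀ x, u x (ε * f (x / ε)) = 0
  bc_top : ∀ x, u x 1 = 0
  energy : IntegrableOn (fun p : ℝ × ℝ => gradSq u p.1 p.2) (OmegaEps f L ε)

/-- The zeroth order approximation `u^{0,1}`: Poiseuille profile, linearly extended below. -/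
def u01 (C : ℝ) (x y : ℝ) : ℝ := if 0 ≤ y then C / 2 * (1 - y) * y else C / 2 * y

/-- A classical solution of a cell problem: harmonic above the rough boundary
`{y₂ = f(y₁)}`, `2π`-periodic in `y₁`, with boundary value `g` on the rough boundary and
finite Dirichlet energy over one period. -/
structure CellSolution (f : ℝ → ℝ) (g : ℝ → ℝ) (β : ℝ → ℝ → ℝ) : Prop where
  cont : ContinuousOn (fun p : ℝ × ℝ => β p.1 p.2) {p : ℝ × ℝ | f p.1 ≤ p.2}
  periodic : ∀ y₁ y₂, β (y₁ + 2 * π) y₂ = β y₁ y₂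
  smooth : ContDiffOn ℝ 2 (fun p : ℝ × ℝ => β p.1 p.2) {p : ℝ × ℝ | f p.1 < p.2}
  harmonic : ∀ p : ℝ × ℝ, f p.1 < p.2 → lap β p.1 p.2 = 0
  bc : ∀ t, β t (f t) = g t
  energy : IntegrableOn (fun p : ℝ × ℝ => gradSq β p.1 p.2)
    {p : ℝ × ℝ | 0 < p.1 ∧ p.1 < 2 * π ∧ f p.1 < p.2}

/-- The average on the fictitious interface `Γ = {y₂ = 0}`. -/
def interfaceAvg (β : ℝ → ℝ → ℝ) : ℝ := (1 / (2 * π)) * ∫ t in (0 : ℝ)..(2 * π), β t 0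

/-- The first-order full boundary-layer approximation
`u^{∞,1}_ε = u^{0,1} + (ε/(1+εβ̄)) (C/2) (β(x/ε) − β̄ x₂)`. -/
def uFull1 (C ε βbar : ℝ) (β : ℝ → ℝ → ℝ) (x y : ℝ) : ℝ :=
  u01 C x y + (ε / (1 + ε * βbar)) * (C / 2) * (β (x / ε) (y / ε) - βbar * y)

namespace BLHelp

open intervalIntegral

variable {f : ℝ → ℝ} {β : ℝ → ℝ → ℝ} {δ : ℝ}

/-- the open domain above the rough boundary -/
def U (f : ℝ → ℝ) : Set (ℝ × ℝ) := {p : ℝ × ℝ | f p.1 < p.2}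

lemma isOpen_U (hf : Continuous f) : IsOpen (U f) :=
  isOpen_lt (hf.comp continuous_fst) continuous_snd

lemma mem_U (hfb : ∀ t, f t ≤ -δ) (hδ0 : 0 < δ) {t y : ℝ} (hy : -δ < y) :
    ((t, y) : ℝ × ℝ) ∈ U f := lt_of_le_of_lt (hfb t) hy

/-- horizontal slice derivative of a C¹ function on an open set -/
lemma slice1 {φ : ℝ × ℝ → ℝ} {s : Set (ℝ × ℝ)} {n : WithTop ℕ∞} (hs : IsOpen s)
    (hφ : ContDiffOn ℝ n φ s) (hn : 1 ≤ n) {p : ℝ × ℝ} (hp : p ∈ s) :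
    HasDerivAt (fun t => φ (t, p.2)) (fderiv ℝ φ p ((1 : ℝ), (0 : ℝ))) p.1 := by
  have hca : ContDiffAt ℝ n φ p := hφ.contDiffAt (hs.mem_nhds hp)
  have hd : DifferentiableAt ℝ φ p := hca.differentiableAt (zero_lt_one.trans_le hn).ne'
  have hγ : HasDerivAt (fun t : ℝ => ((t, p.2) : ℝ × ℝ)) ((1 : ℝ), (0 : ℝ)) p.1 :=
    (hasDerivAt_id p.1).prodMk (hasDerivAt_const p.1 p.2)
  have := hd.hasFDerivAt.comp_hasDerivAt p.1 hγ
  exact this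

/-- vertical slice derivative of a C¹ function on an open set -/
lemma slice2 {φ : ℝ × ℝ → ℝ} {s : Set (ℝ × ℝ)} {n : WithTop ℕ∞} (hs : IsOpen s)
    (hφ : ContDiffOn ℝ n φ s) (hn : 1 ≤ n) {p : ℝ × ℝ} (hp : p ∈ s) :
    HasDerivAt (fun t => φ (p.1, t)) (fderiv ℝ φ p ((0 : ℝ), (1 : ℝ))) p.2 := by
  have hca : ContDiffAt ℝ n φ p := hφ.contDiffAt (hs.mem_nhds hp)
  have hd : DifferentiableAt ℝ φ p := hca.differentiableAt (zero_lt_one.trans_le hn).ne'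
  have hγ : HasDerivAt (fun t : ℝ => ((p.1, t) : ℝ × ℝ)) ((0 : ℝ), (1 : ℝ)) p.2 :=
    (hasDerivAt_const p.2 p.1).prodMk (hasDerivAt_id p.2)
  have := hd.hasFDerivAt.comp_hasDerivAt p.2 hγ
  exact this

section Derivs

variable (β)

/-- β as a function of one (pair) variable -/
def Fb : ℝ × ℝ → ℝ := fun p => β p.1 p.2
def D1 : ℝ × ℝ → ℝ := fun p => fderiv ℝ (Fb β) p ((1 : ℝ), (0 : ℝ))
def D2 : ℝ × ℝ → ℝ := fun p => fderiv ℝ (Fb β) p ((0 : ℝ), (1 : ℝ))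
def E11 : ℝ × ℝ → ℝ := fun p => fderiv ℝ (D1 β) p ((1 : ℝ), (0 : ℝ))
def E22 : ℝ × ℝ → ℝ := fun p => fderiv ℝ (D2 β) p ((0 : ℝ), (1 : ℝ))

end Derivs

section Main

variable (hU : IsOpen (U f)) (hsm : ContDiffOn ℝ 2 (Fb β) (U f))
include hU hsm

lemma contD1 : ContDiffOn ℝ 1 (D1 β) (U f) :=
  (hsm.fderiv_of_isOpen hU (by norm_num)).clm_apply contDiffOn_const

lemma contD2 : ContDiffOn ℝ 1 (D2 β) (U f) :=
  (hsm.fderiv_of_isOpen hU (by norm_num)).clm_apply contDiffOn_const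

lemma contE11 : ContinuousOn (E11 β) (U f) :=
  ((contD1 hU hsm).continuousOn_fderiv_of_isOpen hU le_rfl).clm_apply continuousOn_const

lemma contE22 : ContinuousOn (E22 β) (U f) :=
  ((contD2 hU hsm).continuousOn_fderiv_of_isOpen hU le_rfl).clm_apply continuousOn_const

lemma hasDeriv_slice1 {p : ℝ × ℝ} (hp : p ∈ U f) :
    HasDerivAt (fun t => β t p.2) (D1 β p) p.1 :=
  slice1 hU hsm (by norm_num) hp

lemma hasDeriv_slice2 {p : ℝ × ℝ} (hp : p ∈ U f) :
    HasDerivAt (fun t => β p.1 t) (D2 β p) p.2 :=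
  slice2 hU hsm (by norm_num) hp

lemma pd1_eq {p : ℝ × ℝ} (hp : p ∈ U f) : pd1 β p.1 p.2 = D1 β p :=
  (hasDeriv_slice1 hU hsm hp).deriv

lemma pd2_eq {p : ℝ × ℝ} (hp : p ∈ U f) : pd2 β p.1 p.2 = D2 β p :=
  (hasDeriv_slice2 hU hsm hp).deriv

lemma pd11_eq {p : ℝ × ℝ} (hp : p ∈ U f) : pd1 (pd1 β) p.1 p.2 = E11 β p := by
  have hev : (fun t => pd1 β t p.2) =ᶠ[nhds p.1] (fun t => D1 β (t, p.2)) := by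
    have hmem : {t : ℝ | (t, p.2) ∈ U f} ∈ nhds p.1 :=
      (hU.preimage (continuous_id.prodMk continuous_const)).mem_nhds hp
    exact Filter.eventuallyEq_of_mem hmem fun t ht => pd1_eq hU hsm ht
  have h2 : HasDerivAt (fun t => D1 β (t, p.2)) (E11 β p) p.1 :=
    slice1 hU (contD1 hU hsm) le_rfl hp
  calc pd1 (pd1 β) p.1 p.2 = deriv (fun t => D1 β (t, p.2)) p.1 := hev.deriv_eq
    _ = E11 β p := h2.deriv

lemma pd22_eq {p : ℝ × ℝ} (hp : p ∈ U f) : pd2 (pd2 β) p.1 p.2 = E22 β p := by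
  have hev : (fun t => pd2 β p.1 t) =ᶠ[nhds p.2] (fun t => D2 β (p.1, t)) := by
    have hmem : {t : ℝ | (p.1, t) ∈ U f} ∈ nhds p.2 :=
      (hU.preimage (continuous_const.prodMk continuous_id)).mem_nhds hp
    exact Filter.eventuallyEq_of_mem hmem fun t ht => pd2_eq hU hsm ht
  have h2 : HasDerivAt (fun t => D2 β (p.1, t)) (E22 β p) p.2 :=
    slice2 hU (contD2 hU hsm) le_rfl hp
  calc pd2 (pd2 β) p.1 p.2 = deriv (fun t => D2 β (p.1, t)) p.2 := hev.deriv_eq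
    _ = E22 β p := h2.deriv

lemma harm_eq (hlap : ∀ p : ℝ × ℝ, f p.1 < p.2 → lap β p.1 p.2 = 0)
    {p : ℝ × ℝ} (hp : p ∈ U f) : E22 β p = -E11 β p := by
  have := hlap p hp
  rw [lap, pd11_eq hU hsm hp, pd22_eq hU hsm hp] at this
  linarith

end Main

section Avg

variable (hδ0 : 0 < δ) (hfb : ∀ t, f t ≤ -δ)
  (hU : IsOpen (U f)) (hsm : ContDiffOn ℝ 2 (Fb β) (U f))

/-- horizontal average-type integrals -/
def bfun (β : ℝ → ℝ → ℝ) (y : ℝ) : ℝ := ∫ t in (0:ℝ)..(2*π), D2 β (t, y)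
def Gfun (β : ℝ → ℝ → ℝ) (y : ℝ) : ℝ := ∫ t in (0:ℝ)..(2*π), β t y

include hδ0 hfb hU in
lemma sliceCont {ψ : ℝ × ℝ → ℝ} (hψ : ContinuousOn ψ (U f)) {y : ℝ} (hy : -δ < y) :
    Continuous (fun t => ψ (t, y)) := by
  rw [continuous_iff_continuousAt]
  intro t
  have h1 : ContinuousAt ψ (t, y) := hψ.continuousAt (hU.mem_nhds (mem_U hfb hδ0 hy))
  have h2 : ContinuousAt (fun s : ℝ => ((s, y) : ℝ × ℝ)) t := by fun_prop
  exact h1.comp (f := fun s : ℝ => ((s, y) : ℝ × ℝ)) h2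

include hδ0 hfb hU in
/-- differentiation under the integral sign -/
lemma deriv_under_integral {φ φ' : ℝ × ℝ → ℝ}
    (hφc : ContinuousOn φ (U f)) (hφ'c : ContinuousOn φ' (U f))
    (hd : ∀ p ∈ U f, HasDerivAt (fun y => φ (p.1, y)) (φ' p) p.2)
    {y₀ : ℝ} (hy₀ : -δ < y₀) :
    HasDerivAt (fun y => ∫ t in (0:ℝ)..(2*π), φ (t, y))
      (∫ t in (0:ℝ)..(2*π), φ' (t, y₀)) y₀ := by
  set r : ℝ := (y₀ + δ) / 2 with hr
  have hrpos : 0 < r := by simp only [hr]; linarith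
  have hball : ∀ y ∈ Metric.ball y₀ r, -δ < y := by
    intro y hy
    rw [Metric.mem_ball, Real.dist_eq] at hy
    have := abs_lt.1 hy
    simp only [hr] at this; linarith
  have hKU : (Set.Icc 0 (2*π) ×ˢ Set.Icc (y₀ - r) (y₀ + r)) ⊆ U f := by
    rintro ⟨t, y⟩ ⟨_, hy⟩
    exact mem_U hfb hδ0 (by simp only [Set.mem_Icc] at hy; simp only [hr] at hy ⊢; linarith [hy.1])
  have hK : IsCompact (Set.Icc 0 (2*π) ×ˢ Set.Icc (y₀ - r) (y₀ + r)) :=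
    isCompact_Icc.prod isCompact_Icc
  obtain ⟨M, hM⟩ := hK.exists_bound_of_continuousOn (hφ'c.mono hKU)
  have h2π : (0:ℝ) ≤ 2*π := by positivity
  have key := intervalIntegral.hasDerivAt_integral_of_dominated_loc_of_deriv_le
    (F := fun y t => φ (t, y)) (F' := fun y t => φ' (t, y)) (x₀ := y₀)
    (a := (0:ℝ)) (b := 2*π) (μ := volume) (bound := fun _ => M) (Metric.ball_mem_nhds y₀ hrpos)
    ?_ ?_ ?_ ?_ ?_ ?_
  · exact key.2
  · filter_upwards [Metric.ball_mem_nhds y₀ hrpos] with y hy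
    exact (sliceCont hδ0 hfb hU hφc (hball y hy)).aestronglyMeasurable
  · exact (sliceCont hδ0 hfb hU hφc hy₀).intervalIntegrable 0 (2*π)
  · exact (sliceCont hδ0 hfb hU hφ'c hy₀).aestronglyMeasurable
  · apply Filter.Eventually.of_forall
    intro t ht y hy
    rw [Set.uIoc_of_le h2π] at ht
    apply hM
    constructor
    · exact Set.mem_Icc.2 ⟨le_of_lt ht.1, ht.2⟩
    · rw [Metric.mem_ball, Real.dist_eq] at hy
      have := abs_lt.1 hy
      exact Set.mem_Icc.2 ⟨by linarith [this.1], by linarith [this.2]⟩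
  · exact intervalIntegrable_const
  · apply Filter.Eventually.of_forall
    intro t _ y hy
    exact hd (t, y) (mem_U hfb hδ0 (hball y hy))

end Avg

section Avg2

variable (hδ0 : 0 < δ) (hfb : ∀ t, f t ≤ -δ)
  (hU : IsOpen (U f)) (hsm : ContDiffOn ℝ 2 (Fb β) (U f))
include hδ0 hfb hU hsm

lemma G_hasDeriv {y₀ : ℝ} (hy₀ : -δ < y₀) :
    HasDerivAt (Gfun β) (bfun β y₀) y₀ := by
  apply deriv_under_integral hδ0 hfb hU (φ := Fb β) (φ' := D2 β)
    hsm.continuousOn (contD2 hU hsm).continuousOn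
    (fun p hp => hasDeriv_slice2 hU hsm hp) hy₀

lemma D1_periodic (hper : ∀ y₁ y₂, β (y₁ + 2 * π) y₂ = β y₁ y₂)
    {y : ℝ} (hy : -δ < y) : D1 β (2 * π, y) = D1 β (0, y) := by
  have h1 : D1 β (2 * π, y) = pd1 β (2 * π) y := (pd1_eq hU hsm (mem_U hfb hδ0 hy)).symm
  have h2 : D1 β (0, y) = pd1 β 0 y := (pd1_eq hU hsm (mem_U hfb hδ0 hy)).symm
  rw [h1, h2]
  show deriv (fun t => β t y) (2 * π) = deriv (fun t => β t y) 0
  have hfe : (fun t => β (t + 2 * π) y) = fun t => β t y := funext fun t => hper t y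
  calc deriv (fun t => β t y) (2 * π) = deriv (fun t => β t y) (0 + 2 * π) := by rw [zero_add]
    _ = deriv (fun t => β (t + 2 * π) y) 0 := (deriv_comp_add_const _ _ _).symm
    _ = deriv (fun t => β t y) 0 := by rw [hfe]

lemma b_hasDeriv_zero (hper : ∀ y₁ y₂, β (y₁ + 2 * π) y₂ = β y₁ y₂)
    (hlap : ∀ p : ℝ × ℝ, f p.1 < p.2 → lap β p.1 p.2 = 0)
    {y₀ : ℝ} (hy₀ : -δ < y₀) : HasDerivAt (bfun β) 0 y₀ := by
  have key : HasDerivAt (bfun β) (∫ t in (0:ℝ)..(2*π), E22 β (t, y₀)) y₀ :=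
    deriv_under_integral hδ0 hfb hU (φ := D2 β) (φ' := E22 β)
      (contD2 hU hsm).continuousOn (contE22 hU hsm)
      (fun p hp => slice2 hU (contD2 hU hsm) le_rfl hp) hy₀
  have he : (∫ t in (0:ℝ)..(2*π), E22 β (t, y₀)) = 0 := by
    have hcongr : ∀ t ∈ Set.uIcc (0:ℝ) (2*π), E22 β (t, y₀) = -E11 β (t, y₀) :=
      fun t _ => harm_eq hU hsm hlap (mem_U hfb hδ0 hy₀)
    rw [intervalIntegral.integral_congr hcongr, intervalIntegral.integral_neg]
    have hftc : (∫ t in (0:ℝ)..(2*π), E11 β (t, y₀))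
        = D1 β (2*π, y₀) - D1 β (0, y₀) := by
      apply intervalIntegral.integral_eq_sub_of_hasDerivAt
        (f := fun t => D1 β (t, y₀)) (f' := fun t => E11 β (t, y₀))
      · intro t _
        exact slice1 hU (contD1 hU hsm) le_rfl (mem_U hfb hδ0 hy₀)
      · exact (sliceCont hδ0 hfb hU (contE11 hU hsm) hy₀).intervalIntegrable 0 (2*π)
    rw [hftc, D1_periodic hδ0 hfb hU hsm hper hy₀, sub_self, neg_zero]
  rwa [he] at key

lemma b_const (hper : ∀ y₁ y₂, β (y₁ + 2 * π) y₂ = β y₁ y₂)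
    (hlap : ∀ p : ℝ × ℝ, f p.1 < p.2 → lap β p.1 p.2 = 0)
    {y : ℝ} (hy : 0 ≤ y) : bfun β y = bfun β 0 := by
  have h := intervalIntegral.integral_eq_sub_of_hasDerivAt
    (f := bfun β) (f' := fun _ => (0:ℝ)) (a := 0) (b := y) ?_ (intervalIntegrable_const)
  · have : (∫ _ in (0:ℝ)..y, (0:ℝ)) = 0 := by simp
    rw [this] at h
    linarith [h]
  · intro t ht
    rw [Set.uIcc_of_le hy] at ht
    exact b_hasDeriv_zero hδ0 hfb hU hsm hper hlap (by linarith [ht.1])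

end Avg2

section Energy

variable (hδ0 : 0 < δ) (hfb : ∀ t, f t ≤ -δ)
  (hU : IsOpen (U f)) (hsm : ContDiffOn ℝ 2 (Fb β) (U f))
  (hper : ∀ y₁ y₂, β (y₁ + 2 * π) y₂ = β y₁ y₂)
  (hlap : ∀ p : ℝ × ℝ, f p.1 < p.2 → lap β p.1 p.2 = 0)
  (henergy : MeasureTheory.IntegrableOn (fun p : ℝ × ℝ => gradSq β p.1 p.2)
    {p : ℝ × ℝ | 0 < p.1 ∧ p.1 < 2 * π ∧ f p.1 < p.2})
include hδ0 hfb hU hsm hper hlap henergy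

lemma c_zero : bfun β 0 = 0 := by
  have hπ : (0:ℝ) < π := Real.pi_pos
  set c := bfun β 0 with hc
  set P : Set (ℝ × ℝ) := Set.Ioo 0 (2*π) ×ˢ Set.Ioi (0:ℝ) with hPdef
  have hPU : P ⊆ U f := by
    rintro ⟨t, y⟩ ⟨ht, hy⟩
    exact mem_U hfb hδ0 (lt_trans (by linarith) hy)
  have hPS : P ⊆ {p : ℝ × ℝ | 0 < p.1 ∧ p.1 < 2 * π ∧ f p.1 < p.2} := by
    rintro ⟨t, y⟩ ⟨ht, hy⟩
    exact ⟨ht.1, ht.2, hPU ⟨ht, hy⟩⟩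
  have hPmeas : MeasurableSet P := measurableSet_Ioo.prod measurableSet_Ioi
  have hqcont : ContinuousOn (fun p => (D2 β p)^2) (U f) := (contD2 hU hsm).continuousOn.pow 2
  have hqm : MeasureTheory.AEStronglyMeasurable (fun p => (D2 β p)^2) (volume.restrict P) :=
    (hqcont.mono hPU).aestronglyMeasurable hPmeas
  have hqint : MeasureTheory.IntegrableOn (fun p => (D2 β p)^2) P := by
    apply MeasureTheory.Integrable.mono (henergy.mono_set hPS) hqm
    rw [MeasureTheory.ae_restrict_iff' hPmeas]
    apply Filter.Eventually.of_forall
    intro p hp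
    have h1 : gradSq β p.1 p.2 = (D1 β p)^2 + (D2 β p)^2 := by
      rw [gradSq, pd1_eq hU hsm (hPU hp), pd2_eq hU hsm (hPU hp)]
    rw [Real.norm_eq_abs, Real.norm_eq_abs, h1, abs_of_nonneg (sq_nonneg _),
      abs_of_nonneg (by positivity)]
    nlinarith [sq_nonneg (D1 β p)]
  have hprod : MeasureTheory.Integrable (fun p : ℝ × ℝ => (D2 β p)^2)
      ((volume.restrict (Set.Ioo 0 (2*π))).prod (volume.restrict (Set.Ioi (0:ℝ)))) := by
    rw [MeasureTheory.Measure.prod_restrict]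
    exact hqint
  have hH : MeasureTheory.Integrable
      (fun y => ∫ t, (D2 β (t, y))^2 ∂(volume.restrict (Set.Ioo 0 (2*π))))
      (volume.restrict (Set.Ioi (0:ℝ))) := hprod.integral_prod_right
  have hslice : ∀ y : ℝ, (∫ t, (D2 β (t, y))^2 ∂(volume.restrict (Set.Ioo 0 (2*π))))
      = ∫ t in (0:ℝ)..(2*π), (D2 β (t, y))^2 := by
    intro y
    rw [intervalIntegral.integral_of_le (by positivity),
      MeasureTheory.integral_Ioc_eq_integral_Ioo]
  have hlow : ∀ y ∈ Set.Ioi (0:ℝ), c^2/(2*π) ≤ ∫ t in (0:ℝ)..(2*π), (D2 β (t, y))^2 := by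
    intro y hy
    rw [Set.mem_Ioi] at hy
    have hby : (∫ t in (0:ℝ)..(2*π), D2 β (t, y)) = c :=
      b_const hδ0 hfb hU hsm hper hlap (le_of_lt hy)
    have hgc : Continuous (fun t => D2 β (t, y)) :=
      sliceCont hδ0 hfb hU (contD2 hU hsm).continuousOn (by linarith)
    set m : ℝ := c/(2*π) with hm
    have hnn : 0 ≤ ∫ t in (0:ℝ)..(2*π), (D2 β (t, y) - m)^2 :=
      intervalIntegral.integral_nonneg (by positivity) (fun t _ => sq_nonneg _)
    have i1 : IntervalIntegrable (fun t => (D2 β (t, y))^2) volume 0 (2*π) :=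
      (hgc.pow 2).intervalIntegrable _ _
    have i2 : IntervalIntegrable (fun t => 2*m*D2 β (t, y)) volume 0 (2*π) :=
      (continuous_const.mul hgc).intervalIntegrable _ _
    have hexp : (∫ t in (0:ℝ)..(2*π), (D2 β (t, y) - m)^2)
        = (∫ t in (0:ℝ)..(2*π), (D2 β (t, y))^2) - 2*m*c + m^2*(2*π) := by
      have h1 : ∀ t : ℝ, (D2 β (t, y) - m)^2
          = ((D2 β (t, y))^2 - 2*m*D2 β (t, y)) + m^2 := fun t => by ring
      simp_rw [h1]
      rw [intervalIntegral.integral_add (i1.sub i2) intervalIntegrable_const,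
        intervalIntegral.integral_sub i1 i2, intervalIntegral.integral_const_mul, hby,
        intervalIntegral.integral_const]
      simp [smul_eq_mul]
      ring
    have halg : 2*m*c - m^2*(2*π) = c^2/(2*π) := by
      rw [hm]; field_simp; ring
    linarith [hexp ▸ hnn]
  have hconst : MeasureTheory.Integrable (fun _ : ℝ => c^2/(2*π))
      (volume.restrict (Set.Ioi (0:ℝ))) := by
    apply MeasureTheory.Integrable.mono hH MeasureTheory.aestronglyMeasurable_const
    rw [MeasureTheory.ae_restrict_iff' measurableSet_Ioi]
    apply Filter.Eventually.of_forall
    intro y hy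
    have h1 := hlow y hy
    rw [Real.norm_eq_abs, Real.norm_eq_abs, hslice y]
    have h2 : (0:ℝ) ≤ c^2/(2*π) := by positivity
    rw [abs_of_nonneg h2, abs_of_nonneg (le_trans h2 h1)]
    exact h1
  rcases MeasureTheory.integrable_const_iff.1 hconst with h | h
  · rw [div_eq_zero_iff] at h
    rcases h with h | h
    · exact (pow_eq_zero_iff (by norm_num : (2:ℕ) ≠ 0)).1 h
    · exact absurd h (by positivity)
  · replace h := h.measure_univ_lt_top; rw [MeasureTheory.Measure.restrict_apply_univ, Real.volume_Ioi] at h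
    exact absurd h (lt_irrefl _)

lemma G_const {y : ℝ} (hy : 0 ≤ y) : Gfun β y = Gfun β 0 := by
  have h := intervalIntegral.integral_eq_sub_of_hasDerivAt
    (f := Gfun β) (f' := fun _ => (0:ℝ)) (a := 0) (b := y) ?_ intervalIntegrable_const
  · simp at h; linarith
  · intro t ht
    rw [Set.uIcc_of_le hy] at ht
    have h1 := G_hasDeriv hδ0 hfb hU hsm (show -δ < t by linarith [ht.1])
    rwa [b_const hδ0 hfb hU hsm hper hlap ht.1,
      c_zero hδ0 hfb hU hsm hper hlap henergy] at h1

end Energy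

end BLHelp

/-- The fast-variable horizontal average of `u^{∞,1}_ε` equals the first-order averaged
wall-law solution `u¹`; in particular the horizontal average of `β(·,y₂)` over one period
equals `β̄` for every `y₂ ≥ 0`. -/
theorem average_of_first_order_full_boundary_layer
    (f : ℝ → ℝ) (K : NNReal) (δ C : ℝ)
    (hf : LipschitzWith K f) (hper : Function.Periodic f (2 * π))
    (hδ0 : 0 < δ) (hδ1 : δ < 1) (hfb : ∀ t, -1 ≤ f t ∧ f t ≤ -δ)
    (hC : 0 < C)
    (β : ℝ → ℝ → ℝ) (hβ : CellSolution f (fun t => -f t) β)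
    (hβbar : 0 < interfaceAvg β) :
    (∀ ε : ℝ, 0 < ε → ∀ x₁ x₂ : ℝ, 0 < x₂ → x₂ < 1 →
      (1 / (2 * π * ε)) * ∫ s in (0 : ℝ)..(2 * π * ε),
          uFull1 C ε (interfaceAvg β) β (x₁ + s) x₂
        = -(C / 2) * (x₂ ^ 2 - x₂ / (1 + ε * interfaceAvg β)
            - ε * interfaceAvg β / (1 + ε * interfaceAvg β))) ∧
    (∀ y₂ : ℝ, 0 ≤ y₂ →
      (1 / (2 * π)) * ∫ t in (0 : ℝ)..(2 * π), β t y₂ = interfaceAvg β) := by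
  have hfb' : ∀ t, f t ≤ -δ := fun t => (hfb t).2
  have hU : IsOpen (BLHelp.U f) := BLHelp.isOpen_U hf.continuous
  have hsm : ContDiffOn ℝ 2 (BLHelp.Fb β) (BLHelp.U f) := hβ.smooth
  have hper' : ∀ y₁ y₂, β (y₁ + 2 * π) y₂ = β y₁ y₂ := hβ.periodic
  have hlap : ∀ p : ℝ × ℝ, f p.1 < p.2 → lap β p.1 p.2 = 0 := hβ.harmonic
  have henergy := hβ.energy
  have hπ : (0:ℝ) < π := Real.pi_pos
  have part2 : ∀ y₂ : ℝ, 0 ≤ y₂ →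
      (1 / (2 * π)) * ∫ t in (0:ℝ)..(2*π), β t y₂ = interfaceAvg β := by
    intro y hy
    have hGc := BLHelp.G_const hδ0 hfb' hU hsm hper' hlap henergy hy
    rw [interfaceAvg]
    rw [show (∫ t in (0:ℝ)..(2*π), β t y) = BLHelp.Gfun β y from rfl, hGc]
    rfl
  refine ⟨?_, part2⟩
  intro ε hε x₁ x₂ hx₂0 hx₂1
  set B := interfaceAvg β with hBdef
  have hB : 0 < B := hβbar
  have h1B : 0 < 1 + ε * B := by positivity
  set k : ℝ := ε / (1 + ε * B) * (C / 2) with hk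
  set A : ℝ := C / 2 * (1 - x₂) * x₂ - k * (B * x₂) with hA
  have hx2e : 0 < x₂ / ε := by positivity
  have hδx : -δ < x₂ / ε := by linarith
  have hcont_h : Continuous (fun t => β t (x₂ / ε)) :=
    BLHelp.sliceCont hδ0 hfb' hU hsm.continuousOn hδx
  have hGval : (∫ t in (0:ℝ)..(2*π), β t (x₂/ε)) = 2 * π * B := by
    have h2 := part2 (x₂/ε) (le_of_lt hx2e)
    field_simp at h2
    linarith
  have hsub : (∫ s in (0:ℝ)..(2*π*ε), β ((x₁ + s)/ε) (x₂/ε)) = ε * (2 * π * B) := by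
    have e1 : (∫ s in (0:ℝ)..(2*π*ε), β ((x₁ + s)/ε) (x₂/ε))
        = ∫ u in (x₁ + 0)..(x₁ + 2*π*ε), β (u/ε) (x₂/ε) :=
      intervalIntegral.integral_comp_add_left (fun u => β (u/ε) (x₂/ε)) x₁
    have e2 : (∫ u in (x₁ + 0)..(x₁ + 2*π*ε), β (u/ε) (x₂/ε))
        = ε • ∫ t in ((x₁ + 0)/ε)..((x₁ + 2*π*ε)/ε), β t (x₂/ε) :=
      intervalIntegral.integral_comp_div (fun t => β t (x₂/ε)) (ne_of_gt hε)
    have e3 : (x₁ + 2*π*ε)/ε = (x₁ + 0)/ε + 2*π := by field_simp; ring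
    have hph : Function.Periodic (fun t => β t (x₂/ε)) (2*π) := fun t => hβ.periodic t _
    have e4 : (∫ t in ((x₁ + 0)/ε)..((x₁ + 0)/ε + 2*π), β t (x₂/ε))
        = ∫ t in (0:ℝ)..(2*π), β t (x₂/ε) := by
      have := hph.intervalIntegral_add_eq ((x₁ + 0)/ε) 0
      simpa using this
    rw [e1, e2, e3, e4, hGval, smul_eq_mul]
  have hIeq : (∫ s in (0:ℝ)..(2*π*ε), uFull1 C ε B β (x₁ + s) x₂)
      = ∫ s in (0:ℝ)..(2*π*ε), (A + k * β ((x₁ + s)/ε) (x₂/ε)) := by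
    apply intervalIntegral.integral_congr
    intro s _
    simp only [uFull1, u01, if_pos (le_of_lt hx₂0), hA, hk]
    ring
  have hc2 : Continuous (fun s => k * β ((x₁ + s)/ε) (x₂/ε)) := by
    apply continuous_const.mul
    exact hcont_h.comp ((continuous_const.add continuous_id).div_const ε)
  have hsplit : (∫ s in (0:ℝ)..(2*π*ε), (A + k * β ((x₁ + s)/ε) (x₂/ε)))
      = 2*π*ε*A + k * (ε * (2*π*B)) := by
    rw [intervalIntegral.integral_add intervalIntegrable_const (hc2.intervalIntegrable _ _),
      intervalIntegral.integral_const, intervalIntegral.integral_const_mul, hsub]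
    simp [smul_eq_mul]
  rw [hIeq, hsplit, hA, hk]
  have hπ' : (π:ℝ) ≠ 0 := ne_of_gt hπ
  have hε' : ε ≠ 0 := ne_of_gt hε
  have h1B' : 1 + ε * B ≠ 0 := ne_of_gt h1B
  field_simp
  ring


end
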